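/- Let H be a real Hilbert space and S : [0,∞) → B(H) a family of bounded operators with S(0) = id, S(s+t) = S(s) ∘ S(t), t ↦ S(t)x continuous for each x ∈ H, and ‖S(t)‖ ≤ M·e^{ωt} for some M ≥ 1, ω ∈ ℝ. Let B be a bounded linear operator on H, W := {x ∈ H : B(S(t)x) = 0 for all t ≥ 0}, let z ∈ W, and let u : [0,∞) → ℝ be measurable and locally bounded. If y : [0,∞) → H is continuous and satisfies the mild-solution identity y(t) = S(t)z + ∫₀ᵗ u(τ)·S(t−τ)(B(y(τ))) dτ for all t ≥ 0, then y(t) = S(t)z for all t ≥ 0. Consequently, if y(t) = 0 for all t ≥ T, then S(t)z = 0 for all t ≥ T. -/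

import Mathlib

open RealInnerProductSpace

open Set MeasureTheory Filter in
/-- (Proposition 3.1 of the paper, trajectory level.) For a strongly
continuous, exponentially bounded semigroup `S` and a bounded operator `B`, any continuous
mild solution of `y' = A y + u B y` issued from a point `z` in the unobservable set
`W = {x : B (S t x) = 0 ∀ t ≥ 0}` coincides with the free trajectory `S(·)z`; consequently,
if it vanishes after time `T`, so does `S(·)z`. -/
theorem mild_solution_from_unobservable_is_free
    {H : Type*} [NormedAddCommGroup H] [InnerProductSpace ℝ H] [CompleteSpace H]
    (S : ℝ → H →L[ℝ] H) (B : H →L[ℝ] H)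
    (hS0 : S 0 = ContinuousLinearMap.id ℝ H)
    (hS : ∀ s ≥ (0:ℝ), ∀ t ≥ (0:ℝ), S (s + t) = (S s).comp (S t))
    (hScont : ∀ x : H, ContinuousOn (fun t => S t x) (Set.Ici 0))
    (M ω : ℝ) (hM : 1 ≤ M)
    (hSbound : ∀ t ≥ (0:ℝ), ‖S t‖ ≤ M * Real.exp (ω * t))
    (z : H) (hz : ∀ t ≥ (0:ℝ), B (S t z) = 0)
    (u : ℝ → ℝ) (humeas : Measurable u)
    (hubdd : ∀ T ≥ (0:ℝ), ∃ C : ℝ, ∀ t ∈ Set.Icc (0:ℝ) T, |u t| ≤ C)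
    (y : ℝ → H) (hycont : Continuous y)
    (hmild : ∀ t ≥ (0:ℝ),
      y t = S t z + ∫ τ in (0:ℝ)..t, u τ • S (t - τ) (B (y τ))) :
    (∀ t ≥ (0:ℝ), y t = S t z) ∧
    (∀ T ≥ (0:ℝ), (∀ t ≥ T, y t = 0) → ∀ t ≥ T, S t z = 0) := by
  have hM0 : (0:ℝ) ≤ M := le_trans zero_le_one hM
  -- joint continuity of (s, x) ↦ S s x on Ici 0 × univ
  have hF : ContinuousOn (fun p : ℝ × H => S p.1 p.2) (Set.Ici (0:ℝ) ×ˢ Set.univ) := by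
    rintro ⟨s₀, x₀⟩ ⟨hs₀, -⟩
    set Mb := M * Real.exp (|ω| * (s₀ + 1)) with hMb
    have hMb0 : (0:ℝ) ≤ Mb := by positivity
    have hfst : Filter.Tendsto (fun p : ℝ × H => p.1)
        (nhdsWithin (s₀, x₀) (Set.Ici (0:ℝ) ×ˢ Set.univ)) (nhds s₀) :=
      (continuous_fst.tendsto _).mono_left nhdsWithin_le_nhds
    have hev : ∀ᶠ p : ℝ × H in nhdsWithin (s₀, x₀) (Set.Ici (0:ℝ) ×ˢ Set.univ),
        ‖S p.1 p.2 - S p.1 x₀‖ ≤ Mb * ‖p.2 - x₀‖ := by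
      filter_upwards [self_mem_nhdsWithin,
        hfst.eventually_lt_const (lt_add_one s₀)] with p hp hp1
      have h0 : (0:ℝ) ≤ p.1 := hp.1
      have hSp : ‖S p.1‖ ≤ Mb := by
        refine (hSbound p.1 h0).trans ?_
        have h1 : ω * p.1 ≤ |ω| * (s₀ + 1) := by
          calc ω * p.1 ≤ |ω| * p.1 := mul_le_mul_of_nonneg_right (le_abs_self ω) h0
            _ ≤ |ω| * (s₀ + 1) :=
              mul_le_mul_of_nonneg_left hp1.le (abs_nonneg ω)
        exact mul_le_mul_of_nonneg_left (Real.exp_le_exp.2 h1) hM0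
      calc ‖S p.1 p.2 - S p.1 x₀‖ = ‖S p.1 (p.2 - x₀)‖ := by rw [map_sub]
        _ ≤ ‖S p.1‖ * ‖p.2 - x₀‖ := (S p.1).le_opNorm _
        _ ≤ Mb * ‖p.2 - x₀‖ := mul_le_mul_of_nonneg_right hSp (norm_nonneg _)
    have hrhs : Filter.Tendsto (fun p : ℝ × H => Mb * ‖p.2 - x₀‖)
        (nhdsWithin (s₀, x₀) (Set.Ici (0:ℝ) ×ˢ Set.univ)) (nhds 0) := by
      have hcont : Continuous fun p : ℝ × H => Mb * ‖p.2 - x₀‖ :=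
        continuous_const.mul ((continuous_snd.sub continuous_const).norm)
      have := (hcont.tendsto (s₀, x₀)).mono_left
        (nhdsWithin_le_nhds (s := Set.Ici (0:ℝ) ×ˢ Set.univ))
      simpa using this
    have h1 : Filter.Tendsto (fun p : ℝ × H => S p.1 p.2 - S p.1 x₀)
        (nhdsWithin (s₀, x₀) (Set.Ici (0:ℝ) ×ˢ Set.univ)) (nhds 0) :=
      squeeze_zero_norm' hev hrhs
    have h2 : Filter.Tendsto (fun p : ℝ × H => S p.1 x₀)
        (nhdsWithin (s₀, x₀) (Set.Ici (0:ℝ) ×ˢ Set.univ)) (nhds (S s₀ x₀)) :=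
      by
        have hc : ContinuousWithinAt ((fun t : ℝ => S t x₀) ∘ Prod.fst)
            (Set.Ici (0:ℝ) ×ˢ (Set.univ : Set H)) (s₀, x₀) :=
          (hScont x₀ s₀ hs₀).comp continuousWithinAt_fst (fun p hp => hp.1)
        exact hc.tendsto
    have := h1.add h2
    simpa [ContinuousWithinAt] using this
  -- continuity of the integrand kernel
  have hφ : ∀ t ≥ (0:ℝ), ContinuousOn (fun τ => S (t - τ) (B (y τ))) (Set.Icc 0 t) := by
    intro t ht
    have hc : ContinuousOn (fun τ : ℝ => ((t - τ, B (y τ)) : ℝ × H)) (Set.Icc 0 t) :=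
      ((continuous_const.sub continuous_id).prodMk (B.continuous.comp hycont)).continuousOn
    exact hF.comp hc (fun τ hτ => ⟨sub_nonneg.2 hτ.2, trivial⟩)
  -- interval integrability of the integrand
  have hInt : ∀ t ≥ (0:ℝ),
      IntervalIntegrable (fun τ => u τ • S (t - τ) (B (y τ))) volume 0 t := by
    intro t ht
    rw [intervalIntegrable_iff_integrableOn_Ioc_of_le ht]
    obtain ⟨C₀, hC₀⟩ := hubdd t ht
    obtain ⟨Cφ, hCφ⟩ := isCompact_Icc.exists_bound_of_continuousOn (hφ t ht)
    have hmeasφ : AEStronglyMeasurable (fun τ => S (t - τ) (B (y τ)))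
        (volume.restrict (Set.Ioc 0 t)) :=
      ((hφ t ht).mono Set.Ioc_subset_Icc_self).aestronglyMeasurable measurableSet_Ioc
    have hm : AEStronglyMeasurable (fun τ => u τ • S (t - τ) (B (y τ)))
        (volume.restrict (Set.Ioc 0 t)) :=
      (humeas.aestronglyMeasurable.restrict).smul hmeasφ
    refine Integrable.mono' (integrable_const ((max C₀ 0) * max Cφ 0)) hm ?_
    filter_upwards [ae_restrict_mem measurableSet_Ioc] with τ hτ
    have hτ' : τ ∈ Set.Icc (0:ℝ) t := Set.Ioc_subset_Icc_self hτ
    calc ‖u τ • S (t - τ) (B (y τ))‖ = |u τ| * ‖S (t - τ) (B (y τ))‖ := by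
          rw [norm_smul, Real.norm_eq_abs]
      _ ≤ (max C₀ 0) * max Cφ 0 :=
          mul_le_mul ((hC₀ τ hτ').trans (le_max_left _ _))
            ((hCφ τ hτ').trans (le_max_left _ _)) (norm_nonneg _) (le_max_right _ _)
  -- main Gronwall argument
  have key : ∀ T ≥ (0:ℝ), ∀ t ∈ Set.Icc (0:ℝ) T, y t = S t z := by
    intro T hT
    obtain ⟨C₀, hC₀⟩ := hubdd T hT
    set Cu := max C₀ 0 with hCudef
    set M' := M * Real.exp (|ω| * T) with hM'def
    set K := Cu * (M' * ‖B‖) with hKdef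
    have hCu0 : (0:ℝ) ≤ Cu := le_max_right _ _
    have hM'0 : (0:ℝ) ≤ M' := by positivity
    have hK0 : (0:ℝ) ≤ K := by positivity
    set g : ℝ → ℝ := fun τ => ‖y τ - S τ z‖ with hgdef
    have hgcont : ContinuousOn g (Set.Ici 0) :=
      (hycont.continuousOn.sub (hScont z)).norm
    have hgint : ∀ x ∈ Set.Icc (0:ℝ) T, IntervalIntegrable g volume 0 x := by
      intro x hx
      have : ContinuousOn g (Set.uIcc 0 x) := by
        rw [Set.uIcc_of_le hx.1]
        exact hgcont.mono (fun τ hτ => hτ.1)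
      exact this.intervalIntegrable
    set G : ℝ → ℝ := fun x => ∫ τ in (0:ℝ)..x, g τ with hGdef
    have hGcont : ContinuousOn G (Set.Icc 0 T) := by
      have hio : IntegrableOn g (Set.uIcc 0 T) volume := by
        rw [Set.uIcc_of_le hT]
        exact (hgcont.mono (fun τ hτ => hτ.1)).integrableOn_Icc
      have := intervalIntegral.continuousOn_primitive_interval hio
      rwa [Set.uIcc_of_le hT] at this
    have hG' : ∀ x ∈ Set.Ico (0:ℝ) T, HasDerivWithinAt G (g x) (Set.Ici x) x := by
      intro x hx
      have hxT : x ∈ Set.Icc (0:ℝ) T := ⟨hx.1, hx.2.le⟩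
      refine intervalIntegral.integral_hasDerivWithinAt_right (hgint x hxT)
        (t := Set.Ioi x) ?_ ?_
      · refine ⟨Set.Ici 0, ?_, hgcont.aestronglyMeasurable measurableSet_Ici⟩
        exact mem_of_superset self_mem_nhdsWithin (fun τ hτ => le_trans hx.1 (le_of_lt hτ))
      · exact (hgcont x hx.1).mono (fun τ hτ => le_trans hx.1 (le_of_lt hτ))
    have hGnn : ∀ x ∈ Set.Icc (0:ℝ) T, 0 ≤ G x := fun x hx =>
      intervalIntegral.integral_nonneg hx.1 (fun τ _ => norm_nonneg _)
    have hb : ∀ x ∈ Set.Icc (0:ℝ) T, g x ≤ K * G x := by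
      intro x hx
      have hx0 := hx.1
      have hw : y x - S x z = ∫ τ in (0:ℝ)..x, u τ • S (x - τ) (B (y τ)) := by
        rw [hmild x hx0, add_sub_cancel_left]
      have hptw : ∀ τ ∈ Set.Icc (0:ℝ) x, ‖u τ • S (x - τ) (B (y τ))‖ ≤ K * g τ := by
        intro τ hτ
        have hτ0 : (0:ℝ) ≤ τ := hτ.1
        have hτx : τ ≤ x := hτ.2
        have hBy : B (y τ) = B (y τ - S τ z) := by
          rw [map_sub, hz τ hτ0, sub_zero]
        have hSn : ‖S (x - τ)‖ ≤ M' := by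
          refine (hSbound _ (sub_nonneg.2 hτx)).trans ?_
          have h1 : ω * (x - τ) ≤ |ω| * T := by
            calc ω * (x - τ) ≤ |ω| * (x - τ) :=
                  mul_le_mul_of_nonneg_right (le_abs_self ω) (sub_nonneg.2 hτx)
              _ ≤ |ω| * T := mul_le_mul_of_nonneg_left
                  (by linarith [hx.2]) (abs_nonneg ω)
          exact mul_le_mul_of_nonneg_left (Real.exp_le_exp.2 h1) hM0
        calc ‖u τ • S (x - τ) (B (y τ))‖ = |u τ| * ‖S (x - τ) (B (y τ))‖ := by
              rw [norm_smul, Real.norm_eq_abs]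
          _ ≤ Cu * (M' * (‖B‖ * g τ)) := by
              refine mul_le_mul ((hC₀ τ ⟨hτ0, hτx.trans hx.2⟩).trans (le_max_left _ _))
                ?_ (norm_nonneg _) hCu0
              rw [hBy]
              calc ‖S (x - τ) (B (y τ - S τ z))‖
                  ≤ ‖S (x - τ)‖ * ‖B (y τ - S τ z)‖ := (S (x - τ)).le_opNorm _
                _ ≤ M' * (‖B‖ * g τ) :=
                  mul_le_mul hSn (B.le_opNorm _) (norm_nonneg _) hM'0
          _ = K * g τ := by rw [hKdef]; ring
      calc g x = ‖∫ τ in (0:ℝ)..x, u τ • S (x - τ) (B (y τ))‖ := by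
            show ‖y x - S x z‖ = _; rw [hw]
        _ ≤ ∫ τ in (0:ℝ)..x, ‖u τ • S (x - τ) (B (y τ))‖ :=
            intervalIntegral.norm_integral_le_integral_norm hx0
        _ ≤ ∫ τ in (0:ℝ)..x, K * g τ := by
            refine intervalIntegral.integral_mono_on hx0 (hInt x hx0).norm
              (((hgint x ⟨hx0, hx.2⟩)).const_mul K) hptw
        _ = K * G x := by rw [hGdef, intervalIntegral.integral_const_mul]
    have hGron := norm_le_gronwallBound_of_norm_deriv_right_le (δ := 0) (K := K) (ε := 0)
      hGcont hG' (by simp [hGdef]) ?_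
    · intro t ht
      have hGt := hGron t ht
      rw [sub_zero, gronwallBound_ε0_δ0, Real.norm_eq_abs,
        abs_of_nonneg (hGnn t ht)] at hGt
      have hgt : g t ≤ 0 := by
        have := hb t ht
        nlinarith
      have hg0 : ‖y t - S t z‖ = 0 := le_antisymm hgt (norm_nonneg _)
      exact sub_eq_zero.mp (norm_eq_zero.mp hg0)
    · intro x hx
      have hx' : x ∈ Set.Icc (0:ℝ) T := ⟨hx.1, hx.2.le⟩
      rw [Real.norm_eq_abs, Real.norm_eq_abs, abs_of_nonneg (norm_nonneg _),
        abs_of_nonneg (hGnn x hx'), add_zero]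
      exact hb x hx'
  have main : ∀ t ≥ (0:ℝ), y t = S t z := fun t ht => key t ht t ⟨ht, le_refl t⟩
  refine ⟨main, fun T hT hy t ht => ?_⟩
  rw [← main t (hT.trans ht)]
  exact hy t ht
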